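/- arXiv:2401.00082 — 2 statements merged into one kernel-verified Lean document; each statement's English description precedes it below -/
import Mathlib

section
/- Let (Ω, F, P) be a probability space and, for each n ∈ ℕ, let X^n_1, …, X^n_n be square-integrable real-valued random variables on Ω with common mean E[X^n_i] = m for all i and n. Suppose there are nonnegative reals f(n, k), for n ∈ ℕ and 0 ≤ k ≤ n, such that: (i) |Cov(X^n_i, X^n_j)| ≤ f(n, |i − j|) for all 1 ≤ i, j ≤ n; (ii) sup_{n, 0 ≤ k ≤ n} f(n, k) < ∞; and (iii) (1/n) ∑_{k=1}^{n} f(n, k) → 0 as n → ∞. Then the normalized partial sums S_n = (1/n) ∑_{i=1}^n X^n_i converge to m in probability, i.e., for every ε > 0, P(|S_n − m| > ε) → 0 as n → ∞. -/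
open MeasureTheory Finset Filter ProbabilityTheory

/-- Covariance of two real-valued random variables. -/
noncomputable def cov {Ω : Type*} [MeasurableSpace Ω] (P : Measure Ω) (X Y : Ω → ℝ) : ℝ :=
  ∫ ω, (X ω - ∫ ω', X ω' ∂P) * (Y ω - ∫ ω', Y ω' ∂P) ∂P

lemma wlln_count_aux (n : ℕ) (g : ℕ → ℝ) (hg : ∀ k, k ≤ n → 0 ≤ g k) (i : Fin n) :
    ∑ j : Fin n, g (((i : ℤ) - (j : ℤ)).natAbs) ≤ g 0 + 2 * ∑ k ∈ Icc 1 n, g k := by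
  have ha : (i : ℕ) < n := i.isLt
  have hIcc : Finset.Icc 0 n = insert 0 (Finset.Icc 1 n) := by
    ext k; simp; omega
  have hIccsum : ∑ k ∈ Finset.range (n+1), g k = g 0 + ∑ k ∈ Finset.Icc 1 n, g k := by
    rw [Finset.range_eq_Ico, Finset.Ico_add_one_right_eq_Icc, hIcc, Finset.sum_insert (by simp)]
  calc ∑ j : Fin n, g (((i : ℤ) - (j : ℤ)).natAbs)
      = ∑ j ∈ Finset.range n, g ((((i:ℕ) : ℤ) - (j : ℤ)).natAbs) := by
        rw [Fin.sum_univ_eq_sum_range (fun j => g ((((i:ℕ) : ℤ) - (j : ℤ)).natAbs)) n]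
    _ = ∑ j ∈ Finset.range ((i:ℕ)+1), g ((((i:ℕ) : ℤ) - (j : ℤ)).natAbs)
        + ∑ j ∈ Finset.Ico ((i:ℕ)+1) n, g ((((i:ℕ) : ℤ) - (j : ℤ)).natAbs) := by
        rw [Finset.range_eq_Ico, ← Finset.sum_Ico_consecutive _ (Nat.zero_le _) ha,
          ← Finset.range_eq_Ico]
    _ ≤ (g 0 + ∑ k ∈ Finset.Icc 1 n, g k) + ∑ k ∈ Finset.Icc 1 n, g k := by
        gcongr ?_ + ?_
        · have h1 : ∀ j ∈ Finset.range ((i:ℕ)+1), g ((((i:ℕ) : ℤ) - (j : ℤ)).natAbs)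
              = g ((i:ℕ) - j) := by
            intro j hj; simp only [Finset.mem_range] at hj; congr 1; omega
          rw [Finset.sum_congr rfl h1]
          have hr := Finset.sum_range_reflect (fun k => g k) ((i:ℕ)+1)
          simp only [Nat.add_sub_cancel] at hr
          rw [hr]
          rw [← hIccsum]
          apply Finset.sum_le_sum_of_subset_of_nonneg
          · exact Finset.range_subset_range.2 (by omega)
          · intro k hk _; exact hg k (by simp at hk; omega)
        · have h2 : ∀ j ∈ Finset.Ico ((i:ℕ)+1) n, g ((((i:ℕ) : ℤ) - (j : ℤ)).natAbs)
              = g (j - (i:ℕ)) := by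
            intro j hj; simp only [Finset.mem_Ico] at hj; congr 1; omega
          rw [Finset.sum_congr rfl h2, Finset.sum_Ico_eq_sum_range]
          have h3 : ∑ k ∈ Finset.Icc 1 n, g k = ∑ k ∈ Finset.range n, g (1 + k) := by
            rw [← Finset.Ico_add_one_right_eq_Icc, Finset.sum_Ico_eq_sum_range]; simp
          rw [h3]
          have h4 : ∀ j ∈ Finset.range (n - ((i:ℕ)+1)), g ((i:ℕ) + 1 + j - (i:ℕ)) = g (1 + j) := by
            intro j hj; congr 1; omega
          rw [Finset.sum_congr rfl h4]
          apply Finset.sum_le_sum_of_subset_of_nonneg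
          · exact Finset.range_subset_range.2 (by omega)
          · intro k hk _; exact hg (1+k) (by simp at hk; omega)
    _ = g 0 + 2 * ∑ k ∈ Finset.Icc 1 n, g k := by ring

lemma wlln_integrable_mul {Ω : Type*} [MeasurableSpace Ω] {P : Measure Ω}
    {g h : Ω → ℝ} (hg : MemLp g 2 P) (hh : MemLp h 2 P) :
    Integrable (fun ω => g ω * h ω) P := by
  haveI : ENNReal.HolderTriple 2 2 1 := ⟨by rw [inv_one, ENNReal.inv_two_add_inv_two]⟩
  have hm : MemLp (g • h) 1 P := hh.smul hg
  exact memLp_one_iff_integrable.mp hm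

/-- Weak law of large numbers for a triangular array of square-integrable random
variables with common mean exhibiting asymptotic correlation decay. -/
theorem wlln_triangular_array_correlation_decay
    {Ω : Type*} [MeasurableSpace Ω] (P : Measure Ω) [IsProbabilityMeasure P]
    (m : ℝ) (X : (n : ℕ) → Fin n → Ω → ℝ)
    (hX : ∀ n i, MemLp (X n i) 2 P)
    (hmean : ∀ n i, ∫ ω, X n i ω ∂P = m)
    (f : ℕ → ℕ → ℝ)
    (hf_nonneg : ∀ n k, k ≤ n → 0 ≤ f n k)
    (hcov : ∀ n (i j : Fin n), |cov P (X n i) (X n j)| ≤ f n ((i : ℤ) - (j : ℤ)).natAbs)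
    (hsup : ∃ M : ℝ, ∀ n k, k ≤ n → f n k ≤ M)
    (hdecay : Tendsto (fun n : ℕ => (1 / n : ℝ) * ∑ k ∈ Finset.Icc 1 n, f n k)
      atTop (nhds 0)) :
    ∀ ε : ℝ, 0 < ε →
      Tendsto (fun n : ℕ => P {ω | ε < |(1 / n : ℝ) * ∑ i, X n i ω - m|})
        atTop (nhds 0) := by
  intro ε hε
  obtain ⟨M, hM⟩ := hsup
  set b : ℕ → ℝ := fun n =>
    (f n 0 / n + 2 * ((1 / n : ℝ) * ∑ k ∈ Finset.Icc 1 n, f n k)) / ε ^ 2 with hb_def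
  have hb0 : Tendsto b atTop (nhds 0) := by
    have h1 : Tendsto (fun n : ℕ => f n 0 / n) atTop (nhds 0) := by
      apply squeeze_zero (fun n => div_nonneg (hf_nonneg n 0 (Nat.zero_le n)) (Nat.cast_nonneg n))
        (g := fun n : ℕ => M / n)
        (fun n => by
          rcases Nat.eq_zero_or_pos n with h | h
          · simp [h]
          · have : (0:ℝ) < n := by exact_mod_cast h
            exact (div_le_div_iff_of_pos_right this).mpr (hM n 0 (Nat.zero_le n)))
      exact tendsto_const_div_atTop_nhds_zero_nat M
    have h2 := (h1.add (hdecay.const_mul 2)).div_const (ε ^ 2)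
    simpa [hb_def] using h2
  have key : ∀ n : ℕ, 1 ≤ n →
      P {ω | ε < |(1 / n : ℝ) * ∑ i, X n i ω - m|} ≤ ENNReal.ofReal (b n) := by
    intro n hn
    have hn' : (0 : ℝ) < n := by exact_mod_cast hn
    set S : Ω → ℝ := fun ω => (1 / n : ℝ) * ∑ i, X n i ω with hS_def
    have hS : MemLp S 2 P := by
      have h := (memLp_finset_sum' Finset.univ (fun (i : Fin n) _ => hX n i)).const_mul (1/n : ℝ)
      rw [hS_def]
      simpa [Finset.sum_apply] using h
    have hint : ∀ i : Fin n, Integrable (X n i) P := fun i => (hX n i).integrable one_le_two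
    have hES : ∫ ω, S ω ∂P = m := by
      simp only [hS_def]
      rw [MeasureTheory.integral_const_mul,
        MeasureTheory.integral_finset_sum _ (fun i _ => hint i)]
      simp only [hmean, Finset.sum_const, Finset.card_univ, Fintype.card_fin, nsmul_eq_mul]
      field_simp
    have hY : ∀ i : Fin n, MemLp (fun ω => X n i ω - m) 2 P :=
      fun i => (hX n i).sub (memLp_const m)
    have hmul : ∀ i j : Fin n,
        Integrable (fun ω => (X n i ω - m) * (X n j ω - m)) P :=
      fun i j => wlln_integrable_mul (hY i) (hY j)
    have hcov_eq : ∀ i j : Fin n,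
        cov P (X n i) (X n j) = ∫ ω, (X n i ω - m) * (X n j ω - m) ∂P := by
      intro i j; simp only [cov, hmean]
    have hvar : variance S P
        ≤ f n 0 / n + 2 * ((1 / n : ℝ) * ∑ k ∈ Finset.Icc 1 n, f n k) := by
      have h1 : variance S P = ∫ ω, (S ω - m) ^ 2 ∂P := by
        rw [variance_eq_integral hS.aemeasurable, hES]
      have h2 : ∀ ω, (S ω - m) ^ 2
          = (1 / n : ℝ) ^ 2 * ∑ i, ∑ j, (X n i ω - m) * (X n j ω - m) := by
        intro ω
        have hs : S ω - m = (1 / n : ℝ) * ∑ i, (X n i ω - m) := by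
          simp only [hS_def, Finset.sum_sub_distrib, Finset.sum_const, Finset.card_univ,
            Fintype.card_fin, nsmul_eq_mul]
          field_simp
        rw [hs, mul_pow]
        congr 1
        rw [sq, Finset.sum_mul_sum]
      have h3 : ∫ ω, (S ω - m) ^ 2 ∂P
          = (1 / n : ℝ) ^ 2 * ∑ i, ∑ j, cov P (X n i) (X n j) := by
        simp_rw [h2]
        rw [MeasureTheory.integral_const_mul,
          MeasureTheory.integral_finset_sum _
            (fun i _ => integrable_finset_sum _ (fun j _ => hmul i j))]
        congr 1
        refine Finset.sum_congr rfl fun i _ => ?_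
        rw [MeasureTheory.integral_finset_sum _ (fun j _ => hmul i j)]
        exact Finset.sum_congr rfl fun j _ => (hcov_eq i j).symm
      have h4 : ∑ i, ∑ j, cov P (X n i) (X n j)
          ≤ (n : ℝ) * (f n 0 + 2 * ∑ k ∈ Finset.Icc 1 n, f n k) := by
        calc ∑ i, ∑ j, cov P (X n i) (X n j)
            ≤ ∑ _i : Fin n, (f n 0 + 2 * ∑ k ∈ Finset.Icc 1 n, f n k) := by
              apply Finset.sum_le_sum; intro i _
              calc ∑ j, cov P (X n i) (X n j)
                  ≤ ∑ j : Fin n, f n (((i : ℤ) - (j : ℤ)).natAbs) :=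
                    Finset.sum_le_sum fun j _ => (le_abs_self _).trans (hcov n i j)
                _ ≤ _ := wlln_count_aux n (f n) (hf_nonneg n) i
          _ = (n : ℝ) * (f n 0 + 2 * ∑ k ∈ Finset.Icc 1 n, f n k) := by
              simp [Finset.sum_const, Finset.card_univ, mul_comm]
              ring
      rw [h1, h3]
      calc (1 / n : ℝ) ^ 2 * ∑ i, ∑ j, cov P (X n i) (X n j)
          ≤ (1 / n : ℝ) ^ 2 * ((n : ℝ) * (f n 0 + 2 * ∑ k ∈ Finset.Icc 1 n, f n k)) := by
            apply mul_le_mul_of_nonneg_left h4 (by positivity)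
        _ = f n 0 / n + 2 * ((1 / n : ℝ) * ∑ k ∈ Finset.Icc 1 n, f n k) := by
            field_simp
    calc P {ω | ε < |S ω - m|}
        ≤ P {ω | ε ≤ |S ω - ∫ ω', S ω' ∂P|} := by
          apply measure_mono
          intro ω hω
          simp only [Set.mem_setOf_eq] at hω ⊢
          rw [hES]
          exact le_of_lt hω
      _ ≤ ENNReal.ofReal (variance S P / ε ^ 2) := meas_ge_le_variance_div_sq hS hε
      _ ≤ ENNReal.ofReal (b n) := by
          apply ENNReal.ofReal_le_ofReal
          have hbn : b n
              = (f n 0 / ↑n + 2 * (1 / ↑n * ∑ k ∈ Finset.Icc 1 n, f n k)) / ε ^ 2 := rfl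
          rw [hbn]
          exact (div_le_div_iff_of_pos_right (by positivity)).mpr hvar
  have hub : Tendsto (fun n => ENNReal.ofReal (b n)) atTop (nhds 0) := by
    simpa using ENNReal.tendsto_ofReal hb0
  refine tendsto_of_tendsto_of_tendsto_of_le_of_le' tendsto_const_nhds hub
    (Eventually.of_forall fun n => zero_le) (eventually_atTop.2 ⟨1, key⟩)
end

section
/- Let E be a Polish space (a separable, completely metrizable topological space) equipped with its Borel σ-algebra, and let μ be a Borel probability measure on E. For each n ∈ ℕ, let (X^n_1, …, X^n_n) be an exchangeable E-valued random vector, i.e., for every permutation σ of {1, …, n}, the vector (X^n_{σ(1)}, …, X^n_{σ(n)}) has the same law as (X^n_1, …, X^n_n). Then the following are equivalent: (a) chaoticity: for every k ∈ ℕ and all bounded continuous functions f_1, …, f_k : E → ℝ, E[f_1(X^n_1) ⋯ f_k(X^n_k)] → ∏_{i=1}^k ∫_E f_i dμ as n → ∞; (b) the random empirical measures μ^n = (1/n) ∑_{i=1}^n δ_{X^n_i}, viewed as random elements of the space P(E) of Borel probability measures on E with the topology of weak convergence, converge in distribution to the deterministic limit μ, i.e., for every bounded continuous function Φ : P(E)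 → ℝ, E[Φ(μ^n)] → Φ(μ) as n → ∞. -/
open MeasureTheory Filter
open scoped ENNReal NNReal BoundedContinuousFunction

/-- The empirical measure `(1/(n+1)) ∑_{i} δ_{x i}` of `n + 1` points of `E`, as a
Borel probability measure on `E`. -/
noncomputable def empiricalMeasure {E : Type*} [MeasurableSpace E] {n : ℕ}
    (x : Fin (n + 1) → E) : ProbabilityMeasure E :=
  ⟨((n : ℝ≥0∞) + 1)⁻¹ • ∑ i, Measure.dirac (x i), by
    refine ⟨?_⟩
    have h : ((∑ i : Fin (n + 1), Measure.dirac (x i)) Set.univ) = (n : ℝ≥0∞) + 1 := by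
      simp [Measure.finset_sum_apply]
    rw [Measure.smul_apply, h, smul_eq_mul]
    exact ENNReal.inv_mul_cancel (by simp) (by simp)⟩

section aux
variable {E : Type*} [TopologicalSpace E] [PolishSpace E] [MeasurableSpace E] [BorelSpace E]

lemma integral_empiricalMeasure {n : ℕ} (f : E →ᵇ ℝ) (x : Fin (n + 1) → E) :
    ∫ y, f y ∂(empiricalMeasure x : Measure E) = (∑ i, f (x i)) / ((n : ℝ) + 1) := by
  show ∫ y, f y ∂(((n : ℝ≥0∞) + 1)⁻¹ • ∑ i, Measure.dirac (x i)) = _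
  rw [integral_smul_measure,
    integral_finset_sum_measure (fun i _ => f.integrable _)]
  simp only [integral_dirac]
  have : ((n : ℝ≥0∞) + 1) = ((n + 1 : ℕ) : ℝ≥0∞) := by push_cast; ring
  rw [this, smul_eq_mul, div_eq_inv_mul, ENNReal.toReal_inv, ENNReal.toReal_natCast]
  push_cast
  ring

lemma continuous_empiricalMeasure {n : ℕ} :
    Continuous (empiricalMeasure : (Fin (n + 1) → E) → ProbabilityMeasure E) := by
  rw [continuous_iff_continuousAt]
  intro x
  unfold ContinuousAt
  rw [MeasureTheory.ProbabilityMeasure.tendsto_iff_forall_integral_tendsto]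
  intro f
  simp_rw [integral_empiricalMeasure]
  exact ((continuous_finset_sum _ fun i _ =>
    f.continuous.comp (continuous_apply i)).div_const _).tendsto x
end aux

section aux2
variable {E Ω : Type*} [TopologicalSpace E] [PolishSpace E] [MeasurableSpace E] [BorelSpace E]
  [MeasurableSpace Ω] {P : Measure Ω} [IsProbabilityMeasure P]
  {X : (n : ℕ) → Fin (n + 1) → Ω → E}

lemma integrable_of_bdd {g : Ω → ℝ} (hg : Measurable g) {C : ℝ} (h : ∀ ω, |g ω| ≤ C) :
    Integrable g P :=
  ⟨hg.aestronglyMeasurable, HasFiniteIntegral.of_bounded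
    (ae_of_all _ (by simpa [Real.norm_eq_abs] using h))⟩

lemma exists_perm_comp {k m : ℕ} {φ ψ : Fin k → Fin m} (hφ : Function.Injective φ)
    (hψ : Function.Injective ψ) : ∃ σ : Equiv.Perm (Fin m), ∀ i, σ (ψ i) = φ i := by
  classical
  let e : {x // x ∈ Set.range ψ} ≃ {x // x ∈ Set.range φ} :=
    ((Equiv.ofInjective ψ hψ).symm.trans (Equiv.ofInjective φ hφ))
  refine ⟨e.extendSubtype, fun i => ?_⟩
  rw [Equiv.extendSubtype_apply_of_mem e (ψ i) ⟨i, rfl⟩]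
  show ((Equiv.ofInjective φ hφ) ((Equiv.ofInjective ψ hψ).symm ⟨ψ i, ⟨i, rfl⟩⟩) : Fin m) = φ i
  have : (⟨ψ i, ⟨i, rfl⟩⟩ : {x // x ∈ Set.range ψ}) = (Equiv.ofInjective ψ hψ) i := rfl
  rw [this, Equiv.symm_apply_apply]
  rfl

lemma exch_prod_integral
    (hmeas : ∀ n i, Measurable (X n i))
    (hexch : ∀ n (σ : Equiv.Perm (Fin (n + 1))),
      Measure.map (fun ω => fun i => X n (σ i) ω) P =
      Measure.map (fun ω => fun i => X n i ω) P)
    {k N : ℕ} (f : Fin k → E →ᵇ ℝ) {φ ψ : Fin k → Fin (N + 1)}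
    (hφ : Function.Injective φ) (hψ : Function.Injective ψ) :
    ∫ ω, ∏ i, f i (X N (φ i) ω) ∂P = ∫ ω, ∏ i, f i (X N (ψ i) ω) ∂P := by
  obtain ⟨σ, hσ⟩ := exists_perm_comp hφ hψ
  have hG : Continuous (fun y : Fin (N + 1) → E => ∏ i, f i (y (ψ i))) :=
    continuous_finset_prod _ fun i _ => (f i).continuous.comp (continuous_apply (ψ i))
  have h1 : AEMeasurable (fun ω => fun i => X N (σ i) ω) P :=
    (measurable_pi_lambda _ fun i => hmeas N (σ i)).aemeasurable
  have h2 : AEMeasurable (fun ω => fun i => X N i ω) P :=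
    (measurable_pi_lambda _ fun i => hmeas N i).aemeasurable
  have key := congrArg (fun m => ∫ y, (∏ i, f i (y (ψ i))) ∂m) (hexch N σ)
  rw [integral_map h1 (hG.stronglyMeasurable.aestronglyMeasurable),
    integral_map h2 (hG.stronglyMeasurable.aestronglyMeasurable)] at key
  calc ∫ ω, ∏ i, f i (X N (φ i) ω) ∂P
      = ∫ ω, ∏ i, f i (X N (σ (ψ i)) ω) ∂P := by simp_rw [hσ]
    _ = ∫ ω, ∏ i, f i (X N (ψ i) ω) ∂P := key

end aux2
section aux3
variable {E Ω : Type*} [TopologicalSpace E] [PolishSpace E] [MeasurableSpace E] [BorelSpace E]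
  [MeasurableSpace Ω] {P : Measure Ω} [IsProbabilityMeasure P]
  {X : (n : ℕ) → Fin (n + 1) → Ω → E}

lemma key_diff
    (hmeas : ∀ n i, Measurable (X n i))
    (hexch : ∀ n (σ : Equiv.Perm (Fin (n + 1))),
      Measure.map (fun ω => fun i => X n (σ i) ω) P =
      Measure.map (fun ω => fun i => X n i ω) P)
    (k : ℕ) (f : Fin k → E →ᵇ ℝ) :
    Tendsto (fun n : ℕ =>
      (∫ ω, ∏ i : Fin k, ((∑ j, f i (X (k + n) j ω)) / (((k + n : ℕ) : ℝ) + 1)) ∂P) -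
      ∫ ω, ∏ i : Fin k, f i (X (k + n) (Fin.castLE (Nat.le_succ_of_le (Nat.le_add_right k n)) i) ω) ∂P)
      atTop (nhds 0) := by
  classical
  set C : ℝ := ∏ i : Fin k, (‖f i‖ + 1) with hCdef
  have hCi : ∀ (i : Fin k) (x : E), |f i x| ≤ ‖f i‖ + 1 := fun i x => by
    have := (f i).norm_coe_le_norm x
    rw [Real.norm_eq_abs] at this
    linarith
  have hCnn : 0 ≤ C := Finset.prod_nonneg fun i _ => by positivity
  have hprodbd : ∀ (N : ℕ) (φ : Fin k → Fin (N + 1)) (ω : Ω),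
      |∏ i, f i (X N (φ i) ω)| ≤ C := by
    intro N φ ω
    rw [Finset.abs_prod]
    exact Finset.prod_le_prod (fun i _ => abs_nonneg _) (fun i _ => hCi i _)
  have hint : ∀ (N : ℕ) (φ : Fin k → Fin (N + 1)),
      Integrable (fun ω => ∏ i, f i (X N (φ i) ω)) P := fun N φ =>
    integrable_of_bdd
      (Finset.measurable_prod _ fun i _ => ((f i).continuous.measurable).comp (hmeas N (φ i)))
      (fun ω => hprodbd N φ ω)
  have hIbd : ∀ (N : ℕ) (φ : Fin k → Fin (N + 1)),
      |∫ ω, ∏ i, f i (X N (φ i) ω) ∂P| ≤ C := by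
    intro N φ
    rw [← Real.norm_eq_abs]
    calc ‖∫ ω, ∏ i, f i (X N (φ i) ω) ∂P‖ ≤ C * (P Set.univ).toReal :=
          norm_integral_le_of_norm_le_const
            (Filter.Eventually.of_forall fun ω => by
              rw [Real.norm_eq_abs]; exact hprodbd N φ ω)
      _ = C := by simp
  -- the fraction of injective tuples
  set r : ℕ → ℝ := fun n => ∏ i ∈ Finset.range k,
      (((k + n + 1 - i : ℕ) : ℝ) / ((k + n + 1 : ℕ) : ℝ)) with hrdef
  have hm : Tendsto (fun n : ℕ => ((k + n + 1 : ℕ) : ℝ)) atTop atTop :=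
    tendsto_natCast_atTop_atTop.comp
      (tendsto_atTop_mono (fun n => by simp only [id_eq]; omega) tendsto_id)
  have hr : Tendsto r atTop (nhds 1) := by
    rw [hrdef, show (1 : ℝ) = ∏ _i ∈ Finset.range k, (1 : ℝ) by simp]
    apply tendsto_finset_prod
    intro i hi
    have hik : i ≤ k := le_of_lt (Finset.mem_range.mp hi)
    have hcast : ∀ n : ℕ, ((k + n + 1 - i : ℕ) : ℝ) = ((k + n + 1 : ℕ) : ℝ) - i :=
      fun n => by rw [Nat.cast_sub (by omega)]
    simp_rw [hcast, sub_div]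
    have hd : ∀ n : ℕ, ((k + n + 1 : ℕ) : ℝ) / ((k + n + 1 : ℕ) : ℝ) = 1 := fun n =>
      div_self (by exact_mod_cast Nat.succ_ne_zero (k + n))
    simp_rw [hd]
    simpa using tendsto_const_nhds.sub (Filter.Tendsto.div_atTop tendsto_const_nhds hm)
  -- main bound
  have hbd : ∀ n : ℕ,
      |(∫ ω, ∏ i : Fin k, ((∑ j, f i (X (k + n) j ω)) / (((k + n : ℕ) : ℝ) + 1)) ∂P) -
        ∫ ω, ∏ i : Fin k, f i (X (k + n) (Fin.castLE (Nat.le_succ_of_le (Nat.le_add_right k n)) i) ω) ∂P|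
        ≤ 2 * C * (1 - r n) := by
    intro n
    set T : ℝ := ((k + n + 1 : ℕ) : ℝ) ^ k with hTdef
    have hTpos : 0 < T := pow_pos (by exact_mod_cast Nat.succ_pos (k + n)) k
    set B : ℝ := ∫ ω, ∏ i : Fin k, f i (X (k + n) (Fin.castLE (Nat.le_succ_of_le (Nat.le_add_right k n)) i) ω) ∂P
      with hBdef
    set c : ℕ := (Finset.univ.filter
        (fun φ : Fin k → Fin (k + n + 1) => Function.Injective φ)).card with hcdef
    set c' : ℕ := (Finset.univ.filter
        (fun φ : Fin k → Fin (k + n + 1) => ¬ Function.Injective φ)).card with hc'def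
    set R : ℝ := ∑ φ ∈ Finset.univ.filter
        (fun φ : Fin k → Fin (k + n + 1) => ¬ Function.Injective φ),
        ∫ ω, ∏ i, f i (X (k + n) (φ i) ω) ∂P with hRdef
    have hpoint : ∀ ω : Ω,
        ∏ i : Fin k, ((∑ j, f i (X (k + n) j ω)) / (((k + n : ℕ) : ℝ) + 1))
        = (∑ φ : Fin k → Fin (k + n + 1), ∏ i, f i (X (k + n) (φ i) ω)) / T := by
      intro ω
      rw [Finset.prod_div_distrib]
      congr 1
      · rw [Finset.prod_univ_sum]
        rw [Fintype.piFinset_univ]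
      · rw [Finset.prod_const, Finset.card_univ, Fintype.card_fin, hTdef]
        push_cast
        ring
    have hAeq : (∫ ω, ∏ i : Fin k, ((∑ j, f i (X (k + n) j ω)) / (((k + n : ℕ) : ℝ) + 1)) ∂P)
        = (∑ φ : Fin k → Fin (k + n + 1), ∫ ω, ∏ i, f i (X (k + n) (φ i) ω) ∂P) / T := by
      simp_rw [hpoint]
      rw [MeasureTheory.integral_div, MeasureTheory.integral_finset_sum _
        (fun φ _ => hint (k + n) φ)]
    have hsplit : (∑ φ : Fin k → Fin (k + n + 1), ∫ ω, ∏ i, f i (X (k + n) (φ i) ω) ∂P)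
        = (c : ℝ) * B + R := by
      rw [← Finset.sum_filter_add_sum_filter_not Finset.univ
        (fun φ : Fin k → Fin (k + n + 1) => Function.Injective φ)]
      congr 1
      have hcong : ∀ φ ∈ Finset.univ.filter
          (fun φ : Fin k → Fin (k + n + 1) => Function.Injective φ),
          (∫ ω, ∏ i, f i (X (k + n) (φ i) ω) ∂P) = B :=
        fun φ hφ => exch_prod_integral hmeas hexch f ((Finset.mem_filter.mp hφ).2)
          (Fin.castLE_injective _)
      rw [Finset.sum_congr rfl hcong, Finset.sum_const, nsmul_eq_mul]
    have hRbd : |R| ≤ (c' : ℝ) * C := by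
      calc |R| ≤ ∑ φ ∈ Finset.univ.filter
            (fun φ : Fin k → Fin (k + n + 1) => ¬ Function.Injective φ),
            |∫ ω, ∏ i, f i (X (k + n) (φ i) ω) ∂P| := Finset.abs_sum_le_sum_abs _ _
        _ ≤ (c' : ℝ) * C := by
            rw [hc'def]
            have := Finset.sum_le_card_nsmul (Finset.univ.filter
              (fun φ : Fin k → Fin (k + n + 1) => ¬ Function.Injective φ))
              (fun φ => |∫ ω, ∏ i, f i (X (k + n) (φ i) ω) ∂P|) C
              (fun φ _ => hIbd (k + n) φ)
            simpa [nsmul_eq_mul] using this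
    have htot : c + c' = (k + n + 1) ^ k := by
      rw [hcdef, hc'def, Finset.card_filter_add_card_filter_not, Finset.card_univ,
        Fintype.card_fun, Fintype.card_fin, Fintype.card_fin]
    have hcT : (c : ℝ) + (c' : ℝ) = T := by
      have h2 : ((c + c' : ℕ) : ℝ) = (((k + n + 1) ^ k : ℕ) : ℝ) := by exact_mod_cast htot
      push_cast at h2
      rw [hTdef]
      push_cast
      linarith
    have hcr : r n = (c : ℝ) / T := by
      have hcount : c = (k + n + 1).descFactorial k := by
        rw [hcdef, ← Fintype.card_subtype]
        rw [Fintype.card_congr (Equiv.subtypeInjectiveEquivEmbedding (Fin k) (Fin (k + n + 1)))]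
        rw [Fintype.card_embedding_eq, Fintype.card_fin, Fintype.card_fin]
      rw [hrdef, hcount]
      rw [Nat.descFactorial_eq_prod_range]
      rw [hTdef]
      push_cast
      rw [Finset.prod_div_distrib, Finset.prod_const, Finset.card_range]
    have hdiff : (∫ ω, ∏ i : Fin k, ((∑ j, f i (X (k + n) j ω)) / (((k + n : ℕ) : ℝ) + 1)) ∂P) - B
        = ((c : ℝ) / T - 1) * B + R / T := by
      rw [hAeq, hsplit]
      field_simp
      ring
    have hcle : (c : ℝ) / T ≤ 1 := by
      rw [div_le_one hTpos]
      nlinarith [Nat.cast_nonneg (α := ℝ) c']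
    have hBbd : |B| ≤ C := hIbd (k + n) _
    calc |(∫ ω, ∏ i : Fin k, ((∑ j, f i (X (k + n) j ω)) / (((k + n : ℕ) : ℝ) + 1)) ∂P) - B|
        = |((c : ℝ) / T - 1) * B + R / T| := by rw [hdiff]
      _ ≤ |((c : ℝ) / T - 1) * B| + |R / T| := abs_add_le _ _
      _ = (1 - (c : ℝ) / T) * |B| + |R| / T := by
          rw [abs_mul, abs_div, abs_of_nonneg hTpos.le, abs_of_nonpos (by linarith), neg_sub]
      _ ≤ (1 - (c : ℝ) / T) * C + ((c' : ℝ) * C) / T := by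
          gcongr
      _ = 2 * C * (1 - (c : ℝ) / T) := by
          have hc' : (c' : ℝ) = T - c := by linarith
          rw [hc']
          field_simp
          ring
      _ = 2 * C * (1 - r n) := by rw [hcr]
  have htend : Tendsto (fun n => 2 * C * (1 - r n)) atTop (nhds 0) := by
    have h1 : Tendsto (fun n => (1 : ℝ) - r n) atTop (nhds 0) := by
      simpa using hr.const_sub (1 : ℝ)
    simpa using h1.const_mul (2 * C)
  exact squeeze_zero_norm (fun n => by
    rw [Real.norm_eq_abs]; exact hbd n) htend

end aux3
section aux4
variable {E : Type*} [TopologicalSpace E] [PolishSpace E] [MeasurableSpace E] [BorelSpace E]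

/-- The coercion of a nonnegative bounded continuous function to a real one. -/
noncomputable def nnToReal (g : E →ᵇ ℝ≥0) : E →ᵇ ℝ :=
  BoundedContinuousFunction.comp (fun a : ℝ≥0 => (a : ℝ))
    (LipschitzWith.of_dist_le_mul (K := 1) (fun a b => by
      rw [NNReal.dist_eq, NNReal.coe_one, one_mul, Real.dist_eq])) g

@[simp] lemma nnToReal_apply (g : E →ᵇ ℝ≥0) (x : E) : nnToReal g x = (g x : ℝ) := rfl

lemma exists_nbhd_basis (μ : ProbabilityMeasure E) {U : Set (ProbabilityMeasure E)}
    (hU : IsOpen U) (hμU : μ ∈ U) :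
    ∃ (S : Finset (E →ᵇ ℝ≥0)) (ε : ℝ), 0 < ε ∧
      ∀ ν : ProbabilityMeasure E,
        (∀ g ∈ S, |(∫ x, (g x : ℝ) ∂(ν : Measure E)) - ∫ x, (g x : ℝ) ∂(μ : Measure E)| < ε) →
        ν ∈ U := by
  classical
  obtain ⟨U₁, hU₁, hpre₁⟩ := isOpen_induced_iff.mp hU
  obtain ⟨U₂, hU₂, hpre₂⟩ := isOpen_induced_iff.mp hU₁
  obtain ⟨U₃, hU₃, hpre₃⟩ := isOpen_induced_iff.mp hU₂
  set F : ProbabilityMeasure E → ((E →ᵇ ℝ≥0) → ℝ≥0) :=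
    fun ν => fun g => ν.toWeakDualBCNN g with hFdef
  have hmemiff : ∀ ν : ProbabilityMeasure E, ν ∈ U ↔ F ν ∈ U₃ := by
    intro ν
    rw [← hpre₁, ← hpre₂, ← hpre₃]
    rfl
  have hFμ : F μ ∈ U₃ := (hmemiff μ).mp hμU
  obtain ⟨I, u, hu, hpi⟩ := isOpen_pi_iff.mp hU₃ (F μ) hFμ
  have hchoice : ∀ g ∈ I, ∃ εg : ℝ, 0 < εg ∧ Metric.ball (F μ g) εg ⊆ u g := by
    intro g hg
    obtain ⟨εg, hεg, hball⟩ := Metric.isOpen_iff.mp (hu g hg).1 (F μ g) (hu g hg).2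
    exact ⟨εg, hεg, hball⟩
  choose! εf hεfpos hεfball using hchoice
  set J : Finset ℝ := insert (1 : ℝ) (I.image εf) with hJdef
  have hJne : J.Nonempty := ⟨1, Finset.mem_insert_self _ _⟩
  refine ⟨I, J.min' hJne, ?_, ?_⟩
  · have hmem := J.min'_mem hJne
    rcases Finset.mem_insert.mp hmem with h | h
    · rw [h]; exact one_pos
    · obtain ⟨g, hg, hgeq⟩ := Finset.mem_image.mp h
      rw [← hgeq]; exact hεfpos g hg
  · intro ν hν
    rw [hmemiff ν]
    apply hpi
    intro g hg
    have hle : J.min' hJne ≤ εf g :=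
      Finset.min'_le _ _ (Finset.mem_insert_of_mem (Finset.mem_image_of_mem εf hg))
    apply hεfball g hg
    rw [Metric.mem_ball, NNReal.dist_eq]
    have hcoe : ∀ ρ : ProbabilityMeasure E, ((F ρ g : ℝ≥0) : ℝ) = ∫ x, (g x : ℝ) ∂(ρ : Measure E) := by
      intro ρ
      rw [hFdef]
      show ((ρ.toWeakDualBCNN g : ℝ≥0) : ℝ) = _
      rw [MeasureTheory.ProbabilityMeasure.toWeakDualBCNN_apply]
      show (∫⁻ x, g x ∂(ρ : Measure E)).toReal = _
      rw [BoundedContinuousFunction.toReal_lintegral_coe_eq_integral]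
    rw [hcoe ν, hcoe μ]
    exact lt_of_lt_of_le (hν g hg) hle

end aux4
section aux5
variable {E Ω : Type*} [TopologicalSpace E] [PolishSpace E] [MeasurableSpace E] [BorelSpace E]
  [MeasurableSpace Ω] {P : Measure Ω} [IsProbabilityMeasure P]
  {X : (n : ℕ) → Fin (n + 1) → Ω → E} {μ : ProbabilityMeasure E}

lemma Sn_measurable (hmeas : ∀ n i, Measurable (X n i)) (n : ℕ) (g : E →ᵇ ℝ) :
    Measurable (fun ω => (∑ j, g (X n j ω)) / ((n : ℝ) + 1)) :=
  (Finset.measurable_sum _ fun j _ => g.continuous.measurable.comp (hmeas n j)).div_const _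

lemma Sn_bound (n : ℕ) (g : E →ᵇ ℝ) (ω : Ω) :
    |(∑ j, g (X n j ω)) / ((n : ℝ) + 1)| ≤ ‖g‖ := by
  rw [abs_div, abs_of_nonneg (by positivity : (0:ℝ) ≤ (n : ℝ) + 1), div_le_iff₀ (by positivity)]
  calc |∑ j, g (X n j ω)| ≤ ∑ j : Fin (n + 1), |g (X n j ω)| := Finset.abs_sum_le_sum_abs _ _
    _ ≤ ∑ _j : Fin (n + 1), ‖g‖ := Finset.sum_le_sum fun j _ => by
        have := g.norm_coe_le_norm (X n j ω); rwa [Real.norm_eq_abs] at this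
    _ = ‖g‖ * ((n : ℝ) + 1) := by
        rw [Finset.sum_const, Finset.card_univ, Fintype.card_fin, nsmul_eq_mul]
        push_cast; ring

lemma Mseq_tendsto (hmeas : ∀ n i, Measurable (X n i))
    (hexch : ∀ n (σ : Equiv.Perm (Fin (n + 1))),
      Measure.map (fun ω => fun i => X n (σ i) ω) P =
      Measure.map (fun ω => fun i => X n i ω) P)
    (hA : ∀ (k : ℕ) (f : Fin k → E →ᵇ ℝ),
      Tendsto (fun n : ℕ =>
          ∫ ω, ∏ i : Fin k, f i (X (k + n) (Fin.castLE (Nat.le_succ_of_le (Nat.le_add_right k n)) i) ω) ∂P)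
        atTop (nhds (∏ i : Fin k, ∫ x, f i x ∂(μ : Measure E))))
    (k : ℕ) (f : Fin k → E →ᵇ ℝ) :
    Tendsto (fun n : ℕ => ∫ ω, ∏ i : Fin k, ((∑ j, f i (X n j ω)) / ((n : ℝ) + 1)) ∂P)
      atTop (nhds (∏ i : Fin k, ∫ x, f i x ∂(μ : Measure E))) := by
  set A : ℕ → ℝ := fun n => ∫ ω, ∏ i : Fin k, ((∑ j, f i (X n j ω)) / ((n : ℝ) + 1)) ∂P
    with hAdef
  have h2 := (key_diff hmeas hexch k f).add (hA k f)
  rw [zero_add] at h2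
  have h3 : Tendsto (fun n => A (k + n)) atTop
      (nhds (∏ i : Fin k, ∫ x, f i x ∂(μ : Measure E))) := by
    refine h2.congr fun n => ?_
    rw [hAdef]
    push_cast
    ring
  have h4 : Tendsto (fun n => A (n + k)) atTop
      (nhds (∏ i : Fin k, ∫ x, f i x ∂(μ : Measure E))) := by
    refine h3.congr' (Filter.Eventually.of_forall fun n => ?_)
    rw [Nat.add_comm]
  exact (tendsto_add_atTop_iff_nat k).mp h4

lemma var_tendsto (hmeas : ∀ n i, Measurable (X n i))
    (hexch : ∀ n (σ : Equiv.Perm (Fin (n + 1))),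
      Measure.map (fun ω => fun i => X n (σ i) ω) P =
      Measure.map (fun ω => fun i => X n i ω) P)
    (hA : ∀ (k : ℕ) (f : Fin k → E →ᵇ ℝ),
      Tendsto (fun n : ℕ =>
          ∫ ω, ∏ i : Fin k, f i (X (k + n) (Fin.castLE (Nat.le_succ_of_le (Nat.le_add_right k n)) i) ω) ∂P)
        atTop (nhds (∏ i : Fin k, ∫ x, f i x ∂(μ : Measure E))))
    (g : E →ᵇ ℝ) :
    Tendsto (fun n : ℕ =>
        ∫ ω, ((∑ j, g (X n j ω)) / ((n : ℝ) + 1) - ∫ x, g x ∂(μ : Measure E)) ^ 2 ∂P)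
      atTop (nhds 0) := by
  set c : ℝ := ∫ x, g x ∂(μ : Measure E) with hcdef
  have h1 : Tendsto (fun n : ℕ => ∫ ω, ((∑ j, g (X n j ω)) / ((n : ℝ) + 1)) ∂P)
      atTop (nhds c) := by
    have := Mseq_tendsto hmeas hexch hA 1 (fun _ => g)
    simp only [Fin.prod_univ_one] at this
    exact this
  have h2 : Tendsto (fun n : ℕ => ∫ ω, ((∑ j, g (X n j ω)) / ((n : ℝ) + 1)) ^ 2 ∂P)
      atTop (nhds (c ^ 2)) := by
    have h2' := Mseq_tendsto hmeas hexch hA 2 (fun _ => g)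
    simp only [Fin.prod_univ_two] at h2'
    simp_rw [sq]
    exact h2'
  have hintS : ∀ n : ℕ, Integrable (fun ω => (∑ j, g (X n j ω)) / ((n : ℝ) + 1)) P :=
    fun n => integrable_of_bdd (Sn_measurable hmeas n g) (fun ω => Sn_bound n g ω)
  have hintS2 : ∀ n : ℕ, Integrable (fun ω => ((∑ j, g (X n j ω)) / ((n : ℝ) + 1)) ^ 2) P :=
    fun n => integrable_of_bdd ((Sn_measurable hmeas n g).pow_const 2)
      (fun ω => by
        rw [abs_pow]
        calc |(∑ j, g (X n j ω)) / ((n : ℝ) + 1)| ^ 2 ≤ ‖g‖ ^ 2 := by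
              have := Sn_bound (X := X) n g ω
              have h0 : (0:ℝ) ≤ |(∑ j, g (X n j ω)) / ((n : ℝ) + 1)| := abs_nonneg _
              nlinarith
          _ ≤ ‖g‖ ^ 2 := le_rfl)
  have hexpand : ∀ n : ℕ,
      ∫ ω, ((∑ j, g (X n j ω)) / ((n : ℝ) + 1) - c) ^ 2 ∂P
      = (∫ ω, ((∑ j, g (X n j ω)) / ((n : ℝ) + 1)) ^ 2 ∂P)
        - 2 * c * (∫ ω, ((∑ j, g (X n j ω)) / ((n : ℝ) + 1)) ∂P) + c ^ 2 := by
    intro n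
    have hpt : ∀ ω : Ω, ((∑ j, g (X n j ω)) / ((n : ℝ) + 1) - c) ^ 2
        = ((∑ j, g (X n j ω)) / ((n : ℝ) + 1)) ^ 2
          - 2 * c * ((∑ j, g (X n j ω)) / ((n : ℝ) + 1)) + c ^ 2 := fun ω => by ring
    simp_rw [hpt]
    have hi1 : Integrable (fun ω =>
        ((∑ j, g (X n j ω)) / ((n : ℝ) + 1)) ^ 2
          - 2 * c * ((∑ j, g (X n j ω)) / ((n : ℝ) + 1))) P :=
      (hintS2 n).sub ((hintS n).const_mul (2 * c))
    have hi2 : Integrable (fun ω => 2 * c * ((∑ j, g (X n j ω)) / ((n : ℝ) + 1))) P :=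
      (hintS n).const_mul (2 * c)
    rw [MeasureTheory.integral_add hi1 (integrable_const _),
      MeasureTheory.integral_sub (hintS2 n) hi2,
      integral_const_mul, MeasureTheory.integral_const]
    simp
  simp_rw [hexpand]
  have hfinal := (h2.sub (h1.const_mul (2 * c))).add (tendsto_const_nhds (x := c ^ 2))
  rw [show (c ^ 2 - 2 * c * c + c ^ 2 : ℝ) = 0 from by ring] at hfinal
  exact hfinal

end aux5
section aux6
variable {E Ω : Type*} [TopologicalSpace E] [PolishSpace E] [MeasurableSpace E] [BorelSpace E]
  [MeasurableSpace Ω] {P : Measure Ω} [IsProbabilityMeasure P]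
  {X : (n : ℕ) → Fin (n + 1) → Ω → E} {μ : ProbabilityMeasure E}

lemma meas_large_tendsto (hmeas : ∀ n i, Measurable (X n i))
    (hexch : ∀ n (σ : Equiv.Perm (Fin (n + 1))),
      Measure.map (fun ω => fun i => X n (σ i) ω) P =
      Measure.map (fun ω => fun i => X n i ω) P)
    (hA : ∀ (k : ℕ) (f : Fin k → E →ᵇ ℝ),
      Tendsto (fun n : ℕ =>
          ∫ ω, ∏ i : Fin k, f i (X (k + n) (Fin.castLE (Nat.le_succ_of_le (Nat.le_add_right k n)) i) ω) ∂P)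
        atTop (nhds (∏ i : Fin k, ∫ x, f i x ∂(μ : Measure E))))
    (g : E →ᵇ ℝ) {δ : ℝ} (hδ : 0 < δ) :
    Tendsto (fun n : ℕ =>
        (P {ω | δ ≤ |(∑ j, g (X n j ω)) / ((n : ℝ) + 1) - ∫ x, g x ∂(μ : Measure E)|}).toReal)
      atTop (nhds 0) := by
  set c : ℝ := ∫ x, g x ∂(μ : Measure E) with hcdef
  have hvar := var_tendsto hmeas hexch hA g
  have hqmeas : ∀ n : ℕ, Measurable (fun ω => (∑ j, g (X n j ω)) / ((n : ℝ) + 1) - c) :=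
    fun n => (Sn_measurable hmeas n g).sub measurable_const
  have hqint : ∀ n : ℕ,
      Integrable (fun ω => ((∑ j, g (X n j ω)) / ((n : ℝ) + 1) - c) ^ 2) P := fun n =>
    integrable_of_bdd ((hqmeas n).pow_const 2) (C := (‖g‖ + |c|) ^ 2) (fun ω => by
      rw [abs_pow]
      have h1 : |(∑ j, g (X n j ω)) / ((n : ℝ) + 1) - c| ≤ ‖g‖ + |c| := by
        calc |(∑ j, g (X n j ω)) / ((n : ℝ) + 1) - c|
            ≤ |(∑ j, g (X n j ω)) / ((n : ℝ) + 1)| + |c| := abs_sub _ _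
          _ ≤ ‖g‖ + |c| := by linarith [Sn_bound (X := X) n g ω]
      have h0 : (0:ℝ) ≤ |(∑ j, g (X n j ω)) / ((n : ℝ) + 1) - c| := abs_nonneg _
      nlinarith)
  have hset : ∀ n : ℕ,
      {ω | δ ≤ |(∑ j, g (X n j ω)) / ((n : ℝ) + 1) - c|}
      = {ω | δ ^ 2 ≤ ((∑ j, g (X n j ω)) / ((n : ℝ) + 1) - c) ^ 2} := by
    intro n
    ext ω
    simp only [Set.mem_setOf_eq]
    constructor
    · intro h
      nlinarith [sq_abs ((∑ j, g (X n j ω)) / ((n : ℝ) + 1) - c),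
        abs_nonneg ((∑ j, g (X n j ω)) / ((n : ℝ) + 1) - c)]
    · intro h
      nlinarith [sq_abs ((∑ j, g (X n j ω)) / ((n : ℝ) + 1) - c),
        abs_nonneg ((∑ j, g (X n j ω)) / ((n : ℝ) + 1) - c)]
  have hbd : ∀ n : ℕ,
      (P {ω | δ ≤ |(∑ j, g (X n j ω)) / ((n : ℝ) + 1) - c|}).toReal
      ≤ (δ ^ 2)⁻¹ * ∫ ω, ((∑ j, g (X n j ω)) / ((n : ℝ) + 1) - c) ^ 2 ∂P := by
    intro n
    have hmar := mul_meas_ge_le_integral_of_nonneg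
      (Filter.Eventually.of_forall fun ω => sq_nonneg
        ((∑ j, g (X n j ω)) / ((n : ℝ) + 1) - c))
      (hqint n) (δ ^ 2)
    rw [hset n]
    have hδ2 : (0:ℝ) < δ ^ 2 := by positivity
    have h2 := (le_div_iff₀' hδ2).mpr hmar
    rw [div_eq_inv_mul] at h2
    exact h2
  have h := hvar.const_mul ((δ ^ 2)⁻¹)
  rw [mul_zero] at h
  exact squeeze_zero (fun n => ENNReal.toReal_nonneg) hbd h

end aux6

/-- Sznitman's equivalence: for exchangeable particle systems on a Polish space,
chaoticity (asymptotic factorization of finite-dimensional moments, with limit law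
`μ`) is equivalent to convergence in distribution of the empirical measures, viewed
as random elements of the space of probability measures with the topology of weak
convergence, to the deterministic limit `μ`. -/
theorem chaoticity_iff_empirical_measure_convergence
    {E Ω : Type*} [TopologicalSpace E] [PolishSpace E]
    [MeasurableSpace E] [BorelSpace E]
    [MeasurableSpace Ω] (P : Measure Ω) [IsProbabilityMeasure P]
    (μ : ProbabilityMeasure E)
    (X : (n : ℕ) → Fin (n + 1) → Ω → E)
    (hmeas : ∀ n i, Measurable (X n i))
    (hexch : ∀ n (σ : Equiv.Perm (Fin (n + 1))),
      Measure.map (fun ω => fun i => X n (σ i) ω) P =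
      Measure.map (fun ω => fun i => X n i ω) P) :
    (∀ (k : ℕ) (f : Fin k → BoundedContinuousFunction E ℝ),
        Tendsto
          (fun n : ℕ =>
            ∫ ω, ∏ i : Fin k, f i (X (k + n) (Fin.castLE (by omega) i) ω) ∂P)
          atTop (nhds (∏ i : Fin k, ∫ x, f i x ∂(μ : Measure E)))) ↔
    (∀ Φ : BoundedContinuousFunction (ProbabilityMeasure E) ℝ,
        Tendsto (fun n : ℕ => ∫ ω, Φ (empiricalMeasure (fun i => X n i ω)) ∂P)
          atTop (nhds (Φ μ))) := by
  constructor
  · -- chaoticity implies convergence of empirical measures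
    intro hA Φ
    rw [Metric.tendsto_nhds]
    intro ε hε
    set U : Set (ProbabilityMeasure E) := Φ ⁻¹' Metric.ball (Φ μ) (ε / 2) with hUdef
    have hUopen : IsOpen U := Φ.continuous.isOpen_preimage _ Metric.isOpen_ball
    have hμU : μ ∈ U := by
      simp only [hUdef, Set.mem_preimage, Metric.mem_ball, dist_self]
      linarith
    obtain ⟨S, δ, hδ, hsub⟩ := exists_nbhd_basis μ hUopen hμU
    have hsub' : ∀ ν : ProbabilityMeasure E,
        (∀ g ∈ S, |(∫ x, nnToReal g x ∂(ν : Measure E))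
          - ∫ x, nnToReal g x ∂(μ : Measure E)| < δ) → ν ∈ U :=
      fun ν h => hsub ν (fun g hg => by simpa using h g hg)
    set Aset : ℕ → (E →ᵇ ℝ≥0) → Set Ω := fun n g =>
      {ω | δ ≤ |(∑ j, nnToReal g (X n j ω)) / ((n : ℝ) + 1)
        - ∫ x, nnToReal g x ∂(μ : Measure E)|} with hAsetdef
    have hcheb : ∀ g ∈ S, Tendsto (fun n => (P (Aset n g)).toReal) atTop (nhds 0) :=
      fun g _ => meas_large_tendsto hmeas hexch hA (nnToReal g) hδ
    have hmeasAset : ∀ n g, MeasurableSet (Aset n g) := fun n g =>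
      measurableSet_le measurable_const
        ((Sn_measurable hmeas n (nnToReal g)).sub measurable_const).abs
    set bad : ℕ → Set Ω := fun n => ⋃ g ∈ S, Aset n g with hbaddef
    have hmeasbad : ∀ n, MeasurableSet (bad n) :=
      fun n => S.measurableSet_biUnion (fun g _ => hmeasAset n g)
    have hgood : ∀ n ω, ω ∉ bad n → (empiricalMeasure fun i => X n i ω) ∈ U := by
      intro n ω hω
      apply hsub'
      intro g hg
      have h1 : ω ∉ Aset n g := fun h => hω (Set.mem_biUnion hg h)
      have h2 : |(∑ j, nnToReal g (X n j ω)) / ((n : ℝ) + 1)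
          - ∫ x, nnToReal g x ∂(μ : Measure E)| < δ := not_le.mp h1
      rw [integral_empiricalMeasure (nnToReal g) (fun i => X n i ω)]
      exact h2
    have hΦmeas : ∀ n : ℕ, Measurable (fun ω => Φ (empiricalMeasure fun i => X n i ω)) :=
      fun n => ((Φ.continuous.comp continuous_empiricalMeasure).measurable).comp
        (measurable_pi_lambda _ fun i => hmeas n i)
    have hΦbd : ∀ ν : ProbabilityMeasure E, |Φ ν - Φ μ| ≤ 2 * ‖Φ‖ := fun ν => by
      have h1 := Φ.norm_coe_le_norm ν
      have h2 := Φ.norm_coe_le_norm μ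
      rw [Real.norm_eq_abs] at h1 h2
      calc |Φ ν - Φ μ| ≤ |Φ ν| + |Φ μ| := abs_sub _ _
        _ ≤ 2 * ‖Φ‖ := by linarith
    have hkey : ∀ n : ℕ, dist (∫ ω, Φ (empiricalMeasure fun i => X n i ω) ∂P) (Φ μ)
        ≤ ε / 2 + (2 * ‖Φ‖) * ∑ g ∈ S, (P (Aset n g)).toReal := by
      intro n
      rw [Real.dist_eq]
      have hint1 : Integrable (fun ω => Φ (empiricalMeasure fun i => X n i ω)) P :=
        integrable_of_bdd (hΦmeas n) (C := ‖Φ‖) (fun ω => by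
          have := Φ.norm_coe_le_norm (empiricalMeasure fun i => X n i ω)
          rwa [Real.norm_eq_abs] at this)
      have heq1 : (∫ ω, Φ (empiricalMeasure fun i => X n i ω) ∂P) - Φ μ
          = ∫ ω, (Φ (empiricalMeasure fun i => X n i ω) - Φ μ) ∂P := by
        rw [MeasureTheory.integral_sub hint1 (integrable_const _), MeasureTheory.integral_const]
        simp
      rw [heq1]
      have hptbd : ∀ ω : Ω, |Φ (empiricalMeasure fun i => X n i ω) - Φ μ|
          ≤ ε / 2 + (2 * ‖Φ‖) * Set.indicator (bad n) (fun _ => (1 : ℝ)) ω := by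
        intro ω
        by_cases hω : ω ∈ bad n
        · rw [Set.indicator_of_mem hω]
          have h3 := hΦbd (empiricalMeasure fun i => X n i ω)
          have h4 : (0:ℝ) ≤ ‖Φ‖ := norm_nonneg _
          linarith
        · rw [Set.indicator_of_notMem hω]
          have hmem : dist (Φ (empiricalMeasure fun i => X n i ω)) (Φ μ) < ε / 2 :=
            hgood n ω hω
          rw [Real.dist_eq] at hmem
          have h4 : (0:ℝ) ≤ ‖Φ‖ := norm_nonneg _
          have h5 : (2 * ‖Φ‖) * (0:ℝ) = 0 := by ring
          linarith
      have hiInd : Integrable (fun ω => (2 * ‖Φ‖) *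
          Set.indicator (bad n) (fun _ => (1 : ℝ)) ω) P :=
        ((integrable_const (1 : ℝ)).indicator (hmeasbad n)).const_mul _
      calc |∫ ω, (Φ (empiricalMeasure fun i => X n i ω) - Φ μ) ∂P|
          ≤ ∫ ω, |Φ (empiricalMeasure fun i => X n i ω) - Φ μ| ∂P := by
            have := MeasureTheory.norm_integral_le_integral_norm
              (fun ω => Φ (empiricalMeasure fun i => X n i ω) - Φ μ) (μ := P)
            simpa [Real.norm_eq_abs] using this
        _ ≤ ∫ ω, (ε / 2 + (2 * ‖Φ‖) * Set.indicator (bad n) (fun _ => (1 : ℝ)) ω) ∂P := by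
            apply MeasureTheory.integral_mono
              ((hint1.sub (integrable_const _)).abs) ((integrable_const _).add hiInd) hptbd
        _ = ε / 2 + (2 * ‖Φ‖) * (P (bad n)).toReal := by
            rw [MeasureTheory.integral_add (integrable_const _) hiInd,
              MeasureTheory.integral_const, integral_const_mul,
              MeasureTheory.integral_indicator_const (1 : ℝ) (hmeasbad n)]
            simp [Measure.real]
        _ ≤ ε / 2 + (2 * ‖Φ‖) * ∑ g ∈ S, (P (Aset n g)).toReal := by
            have h1 : P (bad n) ≤ ∑ g ∈ S, P (Aset n g) := measure_biUnion_finset_le _ _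
            have h2 : ∑ g ∈ S, P (Aset n g) ≠ ⊤ :=
              (ENNReal.sum_lt_top.mpr fun g _ => measure_lt_top P _).ne
            have h3 : (P (bad n)).toReal ≤ ∑ g ∈ S, (P (Aset n g)).toReal := by
              calc (P (bad n)).toReal ≤ (∑ g ∈ S, P (Aset n g)).toReal :=
                    ENNReal.toReal_mono h2 h1
                _ = ∑ g ∈ S, (P (Aset n g)).toReal :=
                    ENNReal.toReal_sum fun g _ => (measure_lt_top P _).ne
            have h4 : (0:ℝ) ≤ 2 * ‖Φ‖ := by positivity
            nlinarith
    have hlim : Tendsto (fun n => ε / 2 + (2 * ‖Φ‖) * ∑ g ∈ S, (P (Aset n g)).toReal)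
        atTop (nhds (ε / 2)) := by
      have hsum : Tendsto (fun n => ∑ g ∈ S, (P (Aset n g)).toReal) atTop (nhds 0) := by
        have := tendsto_finset_sum S (fun g hg => hcheb g hg)
        simpa using this
      have := (hsum.const_mul (2 * ‖Φ‖)).const_add (ε / 2)
      simpa using this
    have hev : ∀ᶠ n in atTop,
        (ε / 2 + (2 * ‖Φ‖) * ∑ g ∈ S, (P (Aset n g)).toReal) < ε :=
      hlim.eventually_lt_const (by linarith)
    exact hev.mono fun n hn => lt_of_le_of_lt (hkey n) hn
  · -- convergence of empirical measures implies chaoticity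
    intro hB k f
    set C : ℝ := ∏ i : Fin k, (‖f i‖ + 1) with hCdef
    set Φ : BoundedContinuousFunction (ProbabilityMeasure E) ℝ :=
      BoundedContinuousFunction.ofNormedAddCommGroup
        (fun ν : ProbabilityMeasure E => ∏ i : Fin k, ∫ x, f i x ∂(ν : Measure E))
        (continuous_finset_prod _ fun i _ =>
          MeasureTheory.ProbabilityMeasure.continuous_integral_boundedContinuousFunction (f i))
        C
        (fun ν => by
          rw [Real.norm_eq_abs, Finset.abs_prod, hCdef]
          refine Finset.prod_le_prod (fun i _ => abs_nonneg _) (fun i _ => ?_)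
          have h1 : ‖∫ x, f i x ∂(ν : Measure E)‖ ≤ ‖f i‖ * ((ν : Measure E) Set.univ).toReal :=
            MeasureTheory.norm_integral_le_of_norm_le_const
              (Filter.Eventually.of_forall fun x => (f i).norm_coe_le_norm x)
          rw [Real.norm_eq_abs] at h1
          simp only [MeasureTheory.measure_univ, ENNReal.toReal_one, mul_one] at h1
          linarith) with hΦdef
    have hΦapp : ∀ ν : ProbabilityMeasure E,
        Φ ν = ∏ i : Fin k, ∫ x, f i x ∂(ν : Measure E) := fun ν => rfl
    have hM := hB Φ
    have hMpt : ∀ (n : ℕ) (ω : Ω), Φ (empiricalMeasure fun i => X n i ω)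
        = ∏ i : Fin k, ((∑ j, f i (X n j ω)) / ((n : ℝ) + 1)) := by
      intro n ω
      rw [hΦapp]
      exact Finset.prod_congr rfl fun i _ =>
        integral_empiricalMeasure (f i) (fun j => X n j ω)
    have hMlim : Φ μ = ∏ i : Fin k, ∫ x, f i x ∂(μ : Measure E) := hΦapp μ
    rw [hMlim] at hM
    simp_rw [hMpt] at hM
    -- restrict to the subsequence k + n
    have hshift : Tendsto (fun n : ℕ => k + n) atTop atTop :=
      tendsto_atTop_mono (fun n => by simp only [id_eq]; omega) tendsto_id
    have hM2 : Tendsto (fun n : ℕ =>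
        ∫ ω, ∏ i : Fin k, ((∑ j, f i (X (k + n) j ω)) / (((k + n : ℕ) : ℝ) + 1)) ∂P)
        atTop (nhds (∏ i : Fin k, ∫ x, f i x ∂(μ : Measure E))) := hM.comp hshift
    have hD := key_diff hmeas hexch k f
    have hfinal := hM2.sub hD
    rw [sub_zero] at hfinal
    refine hfinal.congr fun n => ?_
    ring
end
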